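/- With β₀ as in the twelve-point example, the convex envelope satisfies β₀**(y) = max(L₁(y), L₂(y), L₃(y)) on the convex hull of the twelve points, where L₁(y) = 0, L₂(y) = y₁ + y₂ − y₃ − 1, L₃(y) = 2y₁ − y₃ − 1; moreover β₀** agrees with β₀ at all twelve points. -/

import Mathlib

open scoped BigOperators

/-- The twelve-point submodular function β₀ on ℝ³. -/
noncomputable def β₀ (x : Fin 3 → ℝ) : EReal :=
  if x = ![0,0,1] ∨ x = ![1,0,1] ∨ x = ![0,1,1] ∨ x = ![1,1,1] ∨
     x = ![0,0,0] ∨ x = ![0,1,0] ∨ x = ![0,0,-1] then (0 : EReal)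
  else if x = ![1,0,0] ∨ x = ![1,1,0] ∨ x = ![0,1,-1] then (1 : EReal)
  else if x = ![1,0,-1] ∨ x = ![1,1,-1] then (2 : EReal)
  else ⊤

/-- The twelve points. -/
def twelvePoints : Set (Fin 3 → ℝ) :=
  {![0,0,1], ![1,0,1], ![0,1,1], ![1,1,1],
   ![0,0,0], ![1,0,0], ![0,1,0], ![1,1,0],
   ![0,0,-1], ![1,0,-1], ![0,1,-1], ![1,1,-1]}

/-- Convex conjugate of a function on ℝ³. -/
noncomputable def convConj3 (f : (Fin 3 → ℝ) → EReal) (y : Fin 3 → ℝ) : EReal :=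
  ⨆ x : Fin 3 → ℝ, ((∑ i : Fin 3, x i * y i : ℝ) : EReal) - f x

noncomputable def L₁ (_y : Fin 3 → ℝ) : ℝ := 0
noncomputable def L₂ (y : Fin 3 → ℝ) : ℝ := y 0 + y 1 - y 2 - 1
noncomputable def L₃ (y : Fin 3 → ℝ) : ℝ := 2 * y 0 - y 2 - 1



noncomputable def Sval (a1 a2 a3 : ℝ) : ℝ :=
  max (max (max (max (max (max (max (max (max (max (max
    a3 (a1+a3)) (a2+a3)) (a1+a2+a3)) 0) (a1-1)) a2) (a1+a2-1)) (-a3)) (a1-a3-2)) (a2-a3-1)) (a1+a2-a3-2)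

lemma hS1 (a1 a2 a3 : ℝ) : a3 ≤ Sval a1 a2 a3 := by simp [Sval, le_max_iff]
lemma hS2 (a1 a2 a3 : ℝ) : a1+a3 ≤ Sval a1 a2 a3 := by simp [Sval, le_max_iff]
lemma hS3 (a1 a2 a3 : ℝ) : a2+a3 ≤ Sval a1 a2 a3 := by simp [Sval, le_max_iff]
lemma hS4 (a1 a2 a3 : ℝ) : a1+a2+a3 ≤ Sval a1 a2 a3 := by simp [Sval, le_max_iff]
lemma hS5 (a1 a2 a3 : ℝ) : (0:ℝ) ≤ Sval a1 a2 a3 := by simp [Sval, le_max_iff]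
lemma hS6 (a1 a2 a3 : ℝ) : a1-1 ≤ Sval a1 a2 a3 := by simp [Sval, le_max_iff]
lemma hS7 (a1 a2 a3 : ℝ) : a2 ≤ Sval a1 a2 a3 := by simp [Sval, le_max_iff]
lemma hS8 (a1 a2 a3 : ℝ) : a1+a2-1 ≤ Sval a1 a2 a3 := by simp [Sval, le_max_iff]
lemma hS9 (a1 a2 a3 : ℝ) : -a3 ≤ Sval a1 a2 a3 := by simp [Sval, le_max_iff]
lemma hS10 (a1 a2 a3 : ℝ) : a1-a3-2 ≤ Sval a1 a2 a3 := by simp [Sval, le_max_iff]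
lemma hS11 (a1 a2 a3 : ℝ) : a2-a3-1 ≤ Sval a1 a2 a3 := by simp [Sval, le_max_iff]
lemma hS12 (a1 a2 a3 : ℝ) : a1+a2-a3-2 ≤ Sval a1 a2 a3 := by simp [Sval, le_max_iff]

section key
variable (y1 y2 y3 a1 a2 a3 : ℝ)

lemma case1 (b01 : 0 ≤ y1) (b11 : y1 ≤ 1) (b02 : 0 ≤ y2) (b12 : y2 ≤ 1)
    (b03 : -1 ≤ y3) (b13 : y3 ≤ 1)
    (hL2 : y1+y2-y3-1 ≤ 0) (hL3 : 2*y1-y3-1 ≤ 0) :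
    y1*a1 + y2*a2 + y3*a3 ≤ Sval a1 a2 a3 + max (max 0 (y1+y2-y3-1)) (2*y1-y3-1) := by
  have hG0 : (0:ℝ) ≤ max (max 0 (y1+y2-y3-1)) (2*y1-y3-1) := le_max_of_le_left (le_max_left _ _)
  rcases le_total 0 a3 with h3 | h3
  · rcases le_total 0 a1 with h1 | h1 <;> rcases le_total 0 a2 with h2 | h2
    · nlinarith [hS4 a1 a2 a3, mul_nonneg (by linarith : (0:ℝ) ≤ 1-y1) h1,
        mul_nonneg (by linarith : (0:ℝ) ≤ 1-y2) h2, mul_nonneg (by linarith : (0:ℝ) ≤ 1-y3) h3]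
    · nlinarith [hS2 a1 a2 a3, mul_nonneg (by linarith : (0:ℝ) ≤ 1-y1) h1,
        mul_nonneg b02 (by linarith : (0:ℝ) ≤ -a2), mul_nonneg (by linarith : (0:ℝ) ≤ 1-y3) h3]
    · nlinarith [hS3 a1 a2 a3, mul_nonneg b01 (by linarith : (0:ℝ) ≤ -a1),
        mul_nonneg (by linarith : (0:ℝ) ≤ 1-y2) h2, mul_nonneg (by linarith : (0:ℝ) ≤ 1-y3) h3]
    · nlinarith [hS1 a1 a2 a3, mul_nonneg b01 (by linarith : (0:ℝ) ≤ -a1),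
        mul_nonneg b02 (by linarith : (0:ℝ) ≤ -a2), mul_nonneg (by linarith : (0:ℝ) ≤ 1-y3) h3]
  · rcases le_total a1 0 with h1 | h1
    · rcases le_total 0 (a2+a3) with h23 | h23
      · nlinarith [hS7 a1 a2 a3, mul_nonneg b01 (by linarith : (0:ℝ) ≤ -(a1+a3)),
          mul_nonneg (by linarith : (0:ℝ) ≤ 1-y2) h23,
          mul_nonneg (by linarith : (0:ℝ) ≤ y3-(y1+y2-1)) (by linarith : (0:ℝ) ≤ -a3)]
      · nlinarith [hS9 a1 a2 a3, mul_nonneg b01 (by linarith : (0:ℝ) ≤ -(a1+a3)),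
          mul_nonneg b02 (by linarith : (0:ℝ) ≤ -(a2+a3)),
          mul_nonneg (by linarith : (0:ℝ) ≤ y3-(y1+y2-1)) (by linarith : (0:ℝ) ≤ -a3)]
    · rcases le_total a2 0 with h2 | h2
      · rcases le_total 0 (a1+2*a3) with h13 | h13
        · nlinarith [hS2 a1 a2 a3, mul_nonneg b02 (by linarith : (0:ℝ) ≤ -a2),
            mul_nonneg (by linarith : (0:ℝ) ≤ 1-y1) h13,
            mul_nonneg (by linarith : (0:ℝ) ≤ y3-(2*y1-1)) (by linarith : (0:ℝ) ≤ -a3)]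
        · nlinarith [hS9 a1 a2 a3, mul_nonneg b02 (by linarith : (0:ℝ) ≤ -a2),
            mul_nonneg b01 (by linarith : (0:ℝ) ≤ -(a1+2*a3)),
            mul_nonneg (by linarith : (0:ℝ) ≤ y3-(2*y1-1)) (by linarith : (0:ℝ) ≤ -a3)]
      · rcases le_total 0 (a2+a3) with h23 | h23
        · rcases le_total 0 (a1+a3) with h13 | h13
          · nlinarith [hS4 a1 a2 a3, mul_nonneg (by linarith : (0:ℝ) ≤ 1-y1) h13,
              mul_nonneg (by linarith : (0:ℝ) ≤ 1-y2) h23,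
              mul_nonneg (by linarith : (0:ℝ) ≤ y3-(y1+y2-1)) (by linarith : (0:ℝ) ≤ -a3)]
          · nlinarith [hS7 a1 a2 a3, mul_nonneg b01 (by linarith : (0:ℝ) ≤ -(a1+a3)),
              mul_nonneg (by linarith : (0:ℝ) ≤ 1-y2) h23,
              mul_nonneg (by linarith : (0:ℝ) ≤ y3-(y1+y2-1)) (by linarith : (0:ℝ) ≤ -a3)]
        · rcases le_total 0 (a1+a2+2*a3) with h123 | h123
          · nlinarith [hS4 a1 a2 a3,
              mul_nonneg (by linarith : (0:ℝ) ≤ y3-(y1+y2-1)) h2,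
              mul_nonneg (by linarith : (0:ℝ) ≤ y3-(2*y1-1)) (by linarith : (0:ℝ) ≤ -(a2+a3)),
              mul_nonneg (by linarith : (0:ℝ) ≤ 1-y1) h123]
          · nlinarith [hS9 a1 a2 a3,
              mul_nonneg (by linarith : (0:ℝ) ≤ y3-(y1+y2-1)) h2,
              mul_nonneg (by linarith : (0:ℝ) ≤ y3-(2*y1-1)) (by linarith : (0:ℝ) ≤ -(a2+a3)),
              mul_nonneg b01 (by linarith : (0:ℝ) ≤ -(a1+a2+2*a3))]


lemma case2 (b01 : 0 ≤ y1) (b11 : y1 ≤ 1) (b02 : 0 ≤ y2) (b12 : y2 ≤ 1)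
    (b03 : -1 ≤ y3) (b13 : y3 ≤ 1)
    (hc2 : 0 ≤ y1+y2-y3-1) (hc23 : y1 ≤ y2) :
    y1*a1 + y2*a2 + y3*a3 ≤ Sval a1 a2 a3 + max (max 0 (y1+y2-y3-1)) (2*y1-y3-1) := by
  have hG2 : y1+y2-y3-1 ≤ max (max 0 (y1+y2-y3-1)) (2*y1-y3-1) :=
    le_max_of_le_left (le_max_right _ _)
  rcases le_total (a3+1) 0 with h3 | h3
  · rcases le_total (a1-1) 0 with h1 | h1
    · rcases le_total (a2-1) 0 with h2 | h2
      · nlinarith [hS9 a1 a2 a3, mul_nonneg b01 (by linarith : (0:ℝ) ≤ 1-a1),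
          mul_nonneg b02 (by linarith : (0:ℝ) ≤ 1-a2),
          mul_nonneg (by linarith : (0:ℝ) ≤ y3+1) (by linarith : (0:ℝ) ≤ -(a3+1))]
      · nlinarith [hS11 a1 a2 a3, mul_nonneg b01 (by linarith : (0:ℝ) ≤ 1-a1),
          mul_nonneg (by linarith : (0:ℝ) ≤ 1-y2) (by linarith : (0:ℝ) ≤ a2-1),
          mul_nonneg (by linarith : (0:ℝ) ≤ y3+1) (by linarith : (0:ℝ) ≤ -(a3+1))]
    · rcases le_total 0 (a1+a2-2) with h12 | h12
      · nlinarith [hS12 a1 a2 a3, mul_nonneg (by linarith : (0:ℝ) ≤ y2-y1) (by linarith : (0:ℝ) ≤ a1-1),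
          mul_nonneg (by linarith : (0:ℝ) ≤ 1-y2) h12,
          mul_nonneg (by linarith : (0:ℝ) ≤ y3+1) (by linarith : (0:ℝ) ≤ -(a3+1))]
      · nlinarith [hS9 a1 a2 a3, mul_nonneg (by linarith : (0:ℝ) ≤ y2-y1) (by linarith : (0:ℝ) ≤ a1-1),
          mul_nonneg b02 (by linarith : (0:ℝ) ≤ -(a1+a2-2)),
          mul_nonneg (by linarith : (0:ℝ) ≤ y3+1) (by linarith : (0:ℝ) ≤ -(a3+1))]
  · rcases le_total (a1+a3) 0 with h1 | h1
    · rcases le_total (a2+a3) 0 with h2 | h2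
      · nlinarith [hS9 a1 a2 a3, mul_nonneg (by linarith : (0:ℝ) ≤ y1+y2-1-y3) h3,
          mul_nonneg b01 (by linarith : (0:ℝ) ≤ -(a1+a3)),
          mul_nonneg b02 (by linarith : (0:ℝ) ≤ -(a2+a3))]
      · nlinarith [hS7 a1 a2 a3, mul_nonneg (by linarith : (0:ℝ) ≤ y1+y2-1-y3) h3,
          mul_nonneg b01 (by linarith : (0:ℝ) ≤ -(a1+a3)),
          mul_nonneg (by linarith : (0:ℝ) ≤ 1-y2) (by linarith : (0:ℝ) ≤ a2+a3)]
    · rcases le_total 0 (a1+a2+2*a3) with h123 | h123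
      · nlinarith [hS4 a1 a2 a3, mul_nonneg (by linarith : (0:ℝ) ≤ y1+y2-1-y3) h3,
          mul_nonneg (by linarith : (0:ℝ) ≤ y2-y1) (by linarith : (0:ℝ) ≤ a1+a3),
          mul_nonneg (by linarith : (0:ℝ) ≤ 1-y2) h123]
      · nlinarith [hS9 a1 a2 a3, mul_nonneg (by linarith : (0:ℝ) ≤ y1+y2-1-y3) h3,
          mul_nonneg (by linarith : (0:ℝ) ≤ y2-y1) (by linarith : (0:ℝ) ≤ a1+a3),
          mul_nonneg b02 (by linarith : (0:ℝ) ≤ -(a1+a2+2*a3))]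

lemma case3 (b01 : 0 ≤ y1) (b11 : y1 ≤ 1) (b02 : 0 ≤ y2) (b12 : y2 ≤ 1)
    (b03 : -1 ≤ y3) (b13 : y3 ≤ 1)
    (hc3 : 0 ≤ 2*y1-y3-1) (hc32 : y2 ≤ y1) :
    y1*a1 + y2*a2 + y3*a3 ≤ Sval a1 a2 a3 + max (max 0 (y1+y2-y3-1)) (2*y1-y3-1) := by
  have hG3 : 2*y1-y3-1 ≤ max (max 0 (y1+y2-y3-1)) (2*y1-y3-1) := le_max_right _ _
  rcases le_total 0 a2 with h2 | h2
  · rcases le_total (a3+1) 0 with h3 | h3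
    · rcases le_total 0 (a1+a2-2) with h12 | h12
      · nlinarith [hS12 a1 a2 a3, mul_nonneg (by linarith : (0:ℝ) ≤ y1-y2) h2,
          mul_nonneg (by linarith : (0:ℝ) ≤ 1-y1) h12,
          mul_nonneg (by linarith : (0:ℝ) ≤ y3+1) (by linarith : (0:ℝ) ≤ -(a3+1))]
      · nlinarith [hS9 a1 a2 a3, mul_nonneg (by linarith : (0:ℝ) ≤ y1-y2) h2,
          mul_nonneg b01 (by linarith : (0:ℝ) ≤ -(a1+a2-2)),
          mul_nonneg (by linarith : (0:ℝ) ≤ y3+1) (by linarith : (0:ℝ) ≤ -(a3+1))]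
    · rcases le_total 0 (a1+a2+2*a3) with h123 | h123
      · nlinarith [hS4 a1 a2 a3, mul_nonneg (by linarith : (0:ℝ) ≤ y1-y2) h2,
          mul_nonneg (by linarith : (0:ℝ) ≤ 2*y1-1-y3) h3,
          mul_nonneg (by linarith : (0:ℝ) ≤ 1-y1) h123]
      · nlinarith [hS9 a1 a2 a3, mul_nonneg (by linarith : (0:ℝ) ≤ y1-y2) h2,
          mul_nonneg (by linarith : (0:ℝ) ≤ 2*y1-1-y3) h3,
          mul_nonneg b01 (by linarith : (0:ℝ) ≤ -(a1+a2+2*a3))]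
  · rcases le_total (a3+1) 0 with h3 | h3
    · rcases le_total 0 (a1-2) with h1 | h1
      · nlinarith [hS10 a1 a2 a3, mul_nonneg b02 (by linarith : (0:ℝ) ≤ -a2),
          mul_nonneg (by linarith : (0:ℝ) ≤ 1-y1) h1,
          mul_nonneg (by linarith : (0:ℝ) ≤ y3+1) (by linarith : (0:ℝ) ≤ -(a3+1))]
      · nlinarith [hS9 a1 a2 a3, mul_nonneg b02 (by linarith : (0:ℝ) ≤ -a2),
          mul_nonneg b01 (by linarith : (0:ℝ) ≤ 2-a1),
          mul_nonneg (by linarith : (0:ℝ) ≤ y3+1) (by linarith : (0:ℝ) ≤ -(a3+1))]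
    · rcases le_total 0 (a1+2*a3) with h13 | h13
      · nlinarith [hS2 a1 a2 a3, mul_nonneg b02 (by linarith : (0:ℝ) ≤ -a2),
          mul_nonneg (by linarith : (0:ℝ) ≤ 2*y1-1-y3) h3,
          mul_nonneg (by linarith : (0:ℝ) ≤ 1-y1) h13]
      · nlinarith [hS9 a1 a2 a3, mul_nonneg b02 (by linarith : (0:ℝ) ≤ -a2),
          mul_nonneg (by linarith : (0:ℝ) ≤ 2*y1-1-y3) h3,
          mul_nonneg b01 (by linarith : (0:ℝ) ≤ -(a1+2*a3))]

lemma key (b01 : 0 ≤ y1) (b11 : y1 ≤ 1) (b02 : 0 ≤ y2) (b12 : y2 ≤ 1)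
    (b03 : -1 ≤ y3) (b13 : y3 ≤ 1) :
    y1*a1 + y2*a2 + y3*a3 ≤ Sval a1 a2 a3 + max (max 0 (y1+y2-y3-1)) (2*y1-y3-1) := by
  rcases le_total (y1+y2-y3-1) (2*y1-y3-1) with h23 | h23
  · rcases le_total (2*y1-y3-1) 0 with h3 | h3
    · exact case1 y1 y2 y3 a1 a2 a3 b01 b11 b02 b12 b03 b13 (by linarith) h3
    · exact case3 y1 y2 y3 a1 a2 a3 b01 b11 b02 b12 b03 b13 h3 (by linarith)
  · rcases le_total (y1+y2-y3-1) 0 with h2 | h2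
    · exact case1 y1 y2 y3 a1 a2 a3 b01 b11 b02 b12 b03 b13 h2 (by linarith)
    · exact case2 y1 y2 y3 a1 a2 a3 b01 b11 b02 b12 b03 b13 h2 (by linarith)

end key

-- evaluation lemmas for β₀
lemma bev1 : β₀ ![0,0,1] = ((0:ℝ):EReal) := by norm_num [β₀, funext_iff, Fin.forall_fin_succ]
lemma bev2 : β₀ ![1,0,1] = ((0:ℝ):EReal) := by norm_num [β₀, funext_iff, Fin.forall_fin_succ]
lemma bev3 : β₀ ![0,1,1] = ((0:ℝ):EReal) := by norm_num [β₀, funext_iff, Fin.forall_fin_succ]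
lemma bev4 : β₀ ![1,1,1] = ((0:ℝ):EReal) := by norm_num [β₀, funext_iff, Fin.forall_fin_succ]
lemma bev5 : β₀ ![0,0,0] = ((0:ℝ):EReal) := by norm_num [β₀, funext_iff, Fin.forall_fin_succ]
lemma bev6 : β₀ ![1,0,0] = ((1:ℝ):EReal) := by norm_num [β₀, funext_iff, Fin.forall_fin_succ]
lemma bev7 : β₀ ![0,1,0] = ((0:ℝ):EReal) := by norm_num [β₀, funext_iff, Fin.forall_fin_succ]
lemma bev8 : β₀ ![1,1,0] = ((1:ℝ):EReal) := by norm_num [β₀, funext_iff, Fin.forall_fin_succ]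
lemma bev9 : β₀ ![0,0,-1] = ((0:ℝ):EReal) := by norm_num [β₀, funext_iff, Fin.forall_fin_succ]
lemma bev10 : β₀ ![1,0,-1] = ((2:ℝ):EReal) := by
  norm_num [β₀, funext_iff, Fin.forall_fin_succ]
  norm_cast
lemma bev11 : β₀ ![0,1,-1] = ((1:ℝ):EReal) := by norm_num [β₀, funext_iff, Fin.forall_fin_succ]
lemma bev12 : β₀ ![1,1,-1] = ((2:ℝ):EReal) := by
  norm_num [β₀, funext_iff, Fin.forall_fin_succ]
  norm_cast

lemma conj_eq (a : Fin 3 → ℝ) :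
    convConj3 β₀ a = ((Sval (a 0) (a 1) (a 2) : ℝ) : EReal) := by
  apply le_antisymm
  · apply iSup_le
    intro x
    by_cases h1 : x = ![0,0,1] ∨ x = ![1,0,1] ∨ x = ![0,1,1] ∨ x = ![1,1,1] ∨
      x = ![0,0,0] ∨ x = ![0,1,0] ∨ x = ![0,0,-1]
    · rcases h1 with h|h|h|h|h|h|h <;> subst h <;>
      · simp only [bev1, bev2, bev3, bev4, bev5, bev7, bev9, ← EReal.coe_sub,
          EReal.coe_le_coe_iff, Fin.sum_univ_three]
        norm_num [Matrix.cons_val_two]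
        linarith [hS1 (a 0) (a 1) (a 2), hS2 (a 0) (a 1) (a 2), hS3 (a 0) (a 1) (a 2),
          hS4 (a 0) (a 1) (a 2), hS5 (a 0) (a 1) (a 2), hS7 (a 0) (a 1) (a 2),
          hS9 (a 0) (a 1) (a 2)]
    · by_cases h2 : x = ![1,0,0] ∨ x = ![1,1,0] ∨ x = ![0,1,-1]
      · rcases h2 with h|h|h <;> subst h <;>
        · simp only [bev6, bev8, bev11, ← EReal.coe_sub,
            EReal.coe_le_coe_iff, Fin.sum_univ_three]
          norm_num [Matrix.cons_val_two]
          linarith [hS6 (a 0) (a 1) (a 2), hS8 (a 0) (a 1) (a 2), hS11 (a 0) (a 1) (a 2)]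
      · by_cases h3 : x = ![1,0,-1] ∨ x = ![1,1,-1]
        · rcases h3 with h|h <;> subst h <;>
          · simp only [bev10, bev12, ← EReal.coe_sub,
              EReal.coe_le_coe_iff, Fin.sum_univ_three]
            norm_num [Matrix.cons_val_two]
            linarith [hS10 (a 0) (a 1) (a 2), hS12 (a 0) (a 1) (a 2)]
        · rw [β₀, if_neg h1, if_neg h2, if_neg h3, EReal.sub_top]
          exact bot_le
  · have hmax : ∀ s t : ℝ, ((max s t : ℝ) : EReal) = max (s:EReal) (t:EReal) :=
      fun s t => Monotone.map_max (f := (fun r : ℝ => (r : EReal)))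
        (fun _ _ h => EReal.coe_le_coe_iff.2 h)
    have hterm : ∀ p : Fin 3 → ℝ, ∀ v : ℝ, β₀ p = ((v:ℝ):EReal) →
        ((∑ i : Fin 3, p i * a i - v : ℝ) : EReal) ≤ convConj3 β₀ a := by
      intro p v hp
      refine le_trans (le_of_eq ?_) (le_iSup (fun x => ((∑ i : Fin 3, x i * a i : ℝ) : EReal) - β₀ x) p)
      rw [hp, ← EReal.coe_sub]
    simp only [Sval, hmax]
    repeat' apply max_le
    · exact le_trans (by rw [EReal.coe_le_coe_iff]; rw [Fin.sum_univ_three]; norm_num [Matrix.cons_val_two])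
        (hterm ![0,0,1] 0 bev1)
    · exact le_trans (by rw [EReal.coe_le_coe_iff]; rw [Fin.sum_univ_three]; norm_num [Matrix.cons_val_two])
        (hterm ![1,0,1] 0 bev2)
    · exact le_trans (by rw [EReal.coe_le_coe_iff]; rw [Fin.sum_univ_three]; norm_num [Matrix.cons_val_two])
        (hterm ![0,1,1] 0 bev3)
    · exact le_trans (by rw [EReal.coe_le_coe_iff]; rw [Fin.sum_univ_three]; norm_num [Matrix.cons_val_two])
        (hterm ![1,1,1] 0 bev4)
    · exact le_trans (by rw [EReal.coe_le_coe_iff]; rw [Fin.sum_univ_three]; norm_num [Matrix.cons_val_two])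
        (hterm ![0,0,0] 0 bev5)
    · exact le_trans (by rw [EReal.coe_le_coe_iff]; rw [Fin.sum_univ_three]; norm_num [Matrix.cons_val_two])
        (hterm ![1,0,0] 1 bev6)
    · exact le_trans (by rw [EReal.coe_le_coe_iff]; rw [Fin.sum_univ_three]; norm_num [Matrix.cons_val_two])
        (hterm ![0,1,0] 0 bev7)
    · exact le_trans (by rw [EReal.coe_le_coe_iff]; rw [Fin.sum_univ_three]; norm_num [Matrix.cons_val_two])
        (hterm ![1,1,0] 1 bev8)
    · exact le_trans (by rw [EReal.coe_le_coe_iff]; rw [Fin.sum_univ_three]; norm_num [Matrix.cons_val_two])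
        (hterm ![0,0,-1] 0 bev9)
    · exact le_trans (by rw [EReal.coe_le_coe_iff]; rw [Fin.sum_univ_three]; norm_num [Matrix.cons_val_two])
        (hterm ![1,0,-1] 2 bev10)
    · exact le_trans (by rw [EReal.coe_le_coe_iff]; rw [Fin.sum_univ_three]; norm_num [Matrix.cons_val_two])
        (hterm ![0,1,-1] 1 bev11)
    · exact le_trans (by rw [EReal.coe_le_coe_iff]; rw [Fin.sum_univ_three]; norm_num [Matrix.cons_val_two])
        (hterm ![1,1,-1] 2 bev12)

-- the box
lemma hull_box {y : Fin 3 → ℝ} (hy : y ∈ convexHull ℝ twelvePoints) :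
    0 ≤ y 0 ∧ y 0 ≤ 1 ∧ 0 ≤ y 1 ∧ y 1 ≤ 1 ∧ -1 ≤ y 2 ∧ y 2 ≤ 1 := by
  have : convexHull ℝ twelvePoints ⊆
      {z : Fin 3 → ℝ | 0 ≤ z 0 ∧ z 0 ≤ 1 ∧ 0 ≤ z 1 ∧ z 1 ≤ 1 ∧ -1 ≤ z 2 ∧ z 2 ≤ 1} := by
    apply convexHull_min
    · intro z hz
      simp only [twelvePoints, Set.mem_insert_iff, Set.mem_singleton_iff] at hz
      rcases hz with h|h|h|h|h|h|h|h|h|h|h|h <;> subst h <;> norm_num [Matrix.cons_val_two]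
    · intro u hu v hv s t hs ht hst
      obtain ⟨u1,u2,u3,u4,u5,u6⟩ := hu
      obtain ⟨v1,v2,v3,v4,v5,v6⟩ := hv
      refine ⟨?_, ?_, ?_, ?_, ?_, ?_⟩ <;>
        simp only [Pi.add_apply, Pi.smul_apply, smul_eq_mul]
      · nlinarith [mul_nonneg hs u1, mul_nonneg ht v1]
      · nlinarith [mul_le_mul_of_nonneg_left u2 hs, mul_le_mul_of_nonneg_left v2 ht]
      · nlinarith [mul_nonneg hs u3, mul_nonneg ht v3]
      · nlinarith [mul_le_mul_of_nonneg_left u4 hs, mul_le_mul_of_nonneg_left v4 ht]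
      · nlinarith [mul_le_mul_of_nonneg_left u5 hs, mul_le_mul_of_nonneg_left v5 ht]
      · nlinarith [mul_le_mul_of_nonneg_left u6 hs, mul_le_mul_of_nonneg_left v6 ht]
  exact this hy

lemma biconj {y : Fin 3 → ℝ} (hy : y ∈ convexHull ℝ twelvePoints) :
    convConj3 (convConj3 β₀) y = ((max (max (L₁ y) (L₂ y)) (L₃ y) : ℝ) : EReal) := by
  obtain ⟨b01, b11, b02, b12, b03, b13⟩ := hull_box hy
  have hfun : convConj3 β₀ = fun a => ((Sval (a 0) (a 1) (a 2) : ℝ) : EReal) :=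
    funext conj_eq
  rw [convConj3, hfun]
  apply le_antisymm
  · apply iSup_le
    intro x
    rw [← EReal.coe_sub, EReal.coe_le_coe_iff]
    have := key (y 0) (y 1) (y 2) (x 0) (x 1) (x 2) b01 b11 b02 b12 b03 b13
    simp only [Fin.sum_univ_three, L₁, L₂, L₃]
    linarith [this]
  · have h1 : ((L₁ y : ℝ) : EReal) ≤
        ⨆ x : Fin 3 → ℝ, ((∑ i : Fin 3, x i * y i : ℝ) : EReal) - ((Sval (x 0) (x 1) (x 2) : ℝ) : EReal) := by
      refine le_trans ?_ (le_iSup _ ![0,0,0])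
      rw [← EReal.coe_sub, EReal.coe_le_coe_iff, Fin.sum_univ_three]
      norm_num [Matrix.cons_val_two, Sval, L₁]
    have h2 : ((L₂ y : ℝ) : EReal) ≤
        ⨆ x : Fin 3 → ℝ, ((∑ i : Fin 3, x i * y i : ℝ) : EReal) - ((Sval (x 0) (x 1) (x 2) : ℝ) : EReal) := by
      refine le_trans ?_ (le_iSup _ ![1,1,-1])
      rw [← EReal.coe_sub, EReal.coe_le_coe_iff, Fin.sum_univ_three]
      have : Sval 1 1 (-1) = 1 := by norm_num [Matrix.cons_val_two, Sval]
      norm_num [Matrix.cons_val_two, this, L₂]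
    have h3 : ((L₃ y : ℝ) : EReal) ≤
        ⨆ x : Fin 3 → ℝ, ((∑ i : Fin 3, x i * y i : ℝ) : EReal) - ((Sval (x 0) (x 1) (x 2) : ℝ) : EReal) := by
      refine le_trans ?_ (le_iSup _ ![2,0,-1])
      rw [← EReal.coe_sub, EReal.coe_le_coe_iff, Fin.sum_univ_three]
      have : Sval 2 0 (-1) = 1 := by norm_num [Matrix.cons_val_two, Sval]
      norm_num [Matrix.cons_val_two, this, L₃]
    have hmax : ∀ s t : ℝ, ((max s t : ℝ) : EReal) = max (s:EReal) (t:EReal) :=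
      fun s t => Monotone.map_max (f := (fun r : ℝ => (r : EReal)))
        (fun _ _ h => EReal.coe_le_coe_iff.2 h)
    rw [hmax, hmax]
    exact max_le (max_le h1 h2) h3

theorem beta0_convex_envelope :
    (∀ y ∈ convexHull ℝ twelvePoints,
      convConj3 (convConj3 β₀) y = ((max (max (L₁ y) (L₂ y)) (L₃ y) : ℝ) : EReal)) ∧
    (∀ y ∈ twelvePoints, convConj3 (convConj3 β₀) y = β₀ y) := by
  constructor
  · intro y hy
    exact biconj hy
  · intro y hy
    have hmem : y ∈ convexHull ℝ twelvePoints := subset_convexHull ℝ twelvePoints hy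
    rw [biconj hmem]
    simp only [twelvePoints, Set.mem_insert_iff, Set.mem_singleton_iff] at hy
    rcases hy with h|h|h|h|h|h|h|h|h|h|h|h <;> subst h
    · rw [bev1, EReal.coe_eq_coe_iff]; norm_num [Matrix.cons_val_two, L₁, L₂, L₃]
    · rw [bev2, EReal.coe_eq_coe_iff]; norm_num [Matrix.cons_val_two, L₁, L₂, L₃]
    · rw [bev3, EReal.coe_eq_coe_iff]; norm_num [Matrix.cons_val_two, L₁, L₂, L₃]
    · rw [bev4, EReal.coe_eq_coe_iff]; norm_num [Matrix.cons_val_two, L₁, L₂, L₃]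
    · rw [bev5, EReal.coe_eq_coe_iff]; norm_num [Matrix.cons_val_two, L₁, L₂, L₃]
    · rw [bev6, EReal.coe_eq_coe_iff]; norm_num [Matrix.cons_val_two, L₁, L₂, L₃]
    · rw [bev7, EReal.coe_eq_coe_iff]; norm_num [Matrix.cons_val_two, L₁, L₂, L₃]
    · rw [bev8, EReal.coe_eq_coe_iff]; norm_num [Matrix.cons_val_two, L₁, L₂, L₃]
    · rw [bev9, EReal.coe_eq_coe_iff]; norm_num [Matrix.cons_val_two, L₁, L₂, L₃]
    · rw [bev10, EReal.coe_eq_coe_iff]; norm_num [Matrix.cons_val_two, L₁, L₂, L₃]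
    · rw [bev11, EReal.coe_eq_coe_iff]; norm_num [Matrix.cons_val_two, L₁, L₂, L₃]
    · rw [bev12, EReal.coe_eq_coe_iff]; norm_num [Matrix.cons_val_two, L₁, L₂, L₃]
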